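/- Let f := min_{i∈I} f_i be a min-convex function and γ > 0. Then prox_{γf} is union 1/2-averaged nonexpansive: prox_{γf}(x) = {prox_{γf_i}(x) : i ∈ φ(x)} where φ(x) := {i ∈ I : ^γf(x) = ^γf_i(x)}, each prox_{γf_i} is 1/2-averaged (firmly) nonexpansive, and φ is outer semicontinuous with nonempty values. -/

import Mathlib

open Filter Topology RealInnerProductSpace

/-- `f : X → (−∞,+∞]` is proper: it never takes the value `−∞` and is somewhere
finite.  (We model `(−∞,+∞]`-valued functions as `EReal`-valued functions.) -/
def ProperFn {X : Type*} (f : X → EReal) : Prop :=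
  (∃ x, f x ≠ ⊤) ∧ ∀ x, f x ≠ ⊥

/-- The Moreau envelope `^γf(x) = inf_y (f(y) + (1/(2γ))‖x−y‖²)`. -/
noncomputable def moreau {X : Type*} [NormedAddCommGroup X]
    (γ : ℝ) (f : X → EReal) (x : X) : EReal :=
  ⨅ y : X, f y + ((1 / (2 * γ) * ‖x - y‖ ^ 2 : ℝ) : EReal)

/-- The proximal subdifferential `∂_p f(x)`. -/
def psubdiff {X : Type*} [NormedAddCommGroup X] [InnerProductSpace ℝ X]
    (f : X → EReal) (x : X) : Set X :=
  {v | ∃ γ > (0 : ℝ), ∃ δ > (0 : ℝ), ∀ y ∈ Metric.closedBall x δ,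
    ((⟪v, y - x⟫ : ℝ) : EReal) ≤ f y - f x + ((1 / (2 * γ) * ‖y - x‖ ^ 2 : ℝ) : EReal)}

/-- The proximity operator: points attaining the infimum in the Moreau envelope. -/
noncomputable def proxSet {X : Type*} [NormedAddCommGroup X]
    (γ : ℝ) (f : X → EReal) (x : X) : Set X :=
  {p | f p + ((1 / (2 * γ) * ‖x - p‖ ^ 2 : ℝ) : EReal) = moreau γ f x}

/-- Convexity of an `EReal`-valued function. -/
def ERealConvexFn {X : Type*} [AddCommGroup X] [Module ℝ X] (f : X → EReal) : Prop :=
  ∀ x y : X, ∀ t : ℝ, 0 < t → t < 1 →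
    f (t • x + (1 - t) • y) ≤ (t : EReal) * f x + ((1 - t : ℝ) : EReal) * f y

/-- Outer semicontinuity of an index-valued map `φ : X ⇉ I` (finite discrete `I`). -/
def OSCIdx {X I : Type*} [TopologicalSpace X] (φ : X → Set I) : Prop :=
  ∀ (x : X) (i : I) (xn : ℕ → X),
    Tendsto xn atTop (nhds x) → (∀ n, i ∈ φ (xn n)) → i ∈ φ x

/-- `S : X → X` is `1/2`-averaged (firmly) nonexpansive. -/
def HalfAveraged {X : Type*} [NormedAddCommGroup X] [InnerProductSpace ℝ X]
    (S : X → X) : Prop :=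
  ∀ x y : X, ‖S x - S y‖ ^ 2 + ‖(x - S x) - (y - S y)‖ ^ 2 ≤ ‖x - y‖ ^ 2

/-- For a min-convex `f = min_i f_i`, `prox_{γf}` is union `1/2`-averaged
nonexpansive: `prox_{γf}(x) = {prox_{γf_i}(x) : i ∈ φ(x)}` with
`φ(x) = {i : ^γf(x) = ^γf_i(x)}`, each `prox_{γf_i}` single-valued and
`1/2`-averaged, and `φ` osc with nonempty values. -/

lemma ereal_ne_bot_cases (a : EReal) (h : a ≠ ⊥) : a = ⊤ ∨ ∃ r : ℝ, a = (r : EReal) := by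
  induction a using EReal.rec with
  | bot => exact absurd rfl h
  | coe r => exact Or.inr ⟨r, rfl⟩
  | top => exact Or.inl rfl

lemma ereal_real_of (a : EReal) (h : a ≠ ⊥) (h2 : a ≠ ⊤) : ∃ r : ℝ, a = (r : EReal) := by
  rcases ereal_ne_bot_cases a h with h3 | h3
  · exact absurd h3 h2
  · exact h3

lemma lsc_bddBelow_compact {X : Type*} [TopologicalSpace X] {g : X → EReal}
    (hl : LowerSemicontinuous g) (hbot : ∀ y, g y ≠ ⊥) {s : Set X} (hs : IsCompact s) :
    ∃ m : ℝ, ∀ y ∈ s, (m : EReal) ≤ g y := by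
  set U : ℕ → Set X := fun n => {y | ((-(n:ℝ) : ℝ) : EReal) < g y} with hU
  have hUopen : ∀ n, IsOpen (U n) := fun n => hl.isOpen_preimage _
  have hcover : s ⊆ ⋃ n, U n := by
    intro y _
    rcases ereal_ne_bot_cases (g y) (hbot y) with h | ⟨r, h⟩
    · refine Set.mem_iUnion.2 ⟨0, ?_⟩
      simp only [U, Set.mem_setOf_eq, h]
      exact lt_top_iff_ne_top.2 (by simp)
    · obtain ⟨n, hn⟩ := exists_nat_gt (-r)
      refine Set.mem_iUnion.2 ⟨n, ?_⟩
      simp only [U, Set.mem_setOf_eq, h]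
      exact_mod_cast (by linarith : -(n:ℝ) < r)
  obtain ⟨t, ht⟩ := hs.elim_finite_subcover U hUopen hcover
  rcases t.eq_empty_or_nonempty with rfl | htne
  · exact ⟨0, fun y hy => absurd (ht hy) (by simp)⟩
  · obtain ⟨N, hN, hNmax⟩ := t.exists_max_image id htne
    refine ⟨-(N:ℝ), fun y hy => ?_⟩
    obtain ⟨n, hn, hyn⟩ := Set.mem_iUnion₂.1 (ht hy)
    have h1 : (-(N:ℝ) : ℝ) ≤ -(n:ℝ) := by
      have := hNmax n hn
      simp only [id] at this
      exact neg_le_neg (by exact_mod_cast this)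
    calc ((-(N:ℝ) : ℝ) : EReal) ≤ ((-(n:ℝ) : ℝ) : EReal) := EReal.coe_le_coe_iff.2 h1
      _ ≤ g y := le_of_lt hyn

lemma linear_minorant {X : Type*} [NormedAddCommGroup X] [NormedSpace ℝ X]
    [FiniteDimensional ℝ X] {g : X → EReal}
    (hg : ProperFn g) (hl : LowerSemicontinuous g) (hc : ERealConvexFn g) :
    ∃ (x0 : X) (r0 A K : ℝ), g x0 = (r0 : EReal) ∧ 0 ≤ K ∧
      ∀ p : X, ((A - K * ‖p - x0‖ : ℝ) : EReal) ≤ g p := by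
  obtain ⟨⟨x0, hx0top⟩, hbot⟩ := hg
  obtain ⟨r0, hr0⟩ : ∃ r : ℝ, g x0 = (r : EReal) := by
    rcases ereal_ne_bot_cases (g x0) (hbot x0) with h | h
    · exact absurd h hx0top
    · exact h
  obtain ⟨m, hm⟩ := lsc_bddBelow_compact hl hbot (isCompact_closedBall x0 1)
  refine ⟨x0, r0, min m r0, |m - r0|, hr0, abs_nonneg _, fun p => ?_⟩
  set R := ‖p - x0‖ with hR
  have hR0 : 0 ≤ R := norm_nonneg _
  by_cases hle : R ≤ 1
  · have hp : p ∈ Metric.closedBall x0 1 := by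
      rw [Metric.mem_closedBall, dist_eq_norm]; exact hle
    refine le_trans ?_ (hm p hp)
    apply EReal.coe_le_coe_iff.2
    have : 0 ≤ |m - r0| * R := mul_nonneg (abs_nonneg _) hR0
    have : min m r0 ≤ m := min_le_left _ _
    linarith
  · push_neg at hle
    rcases ereal_ne_bot_cases (g p) (hbot p) with htop | ⟨rp, hrp⟩
    · rw [htop]; exact le_top
    set t := 1 / R with ht
    have htpos : 0 < t := by positivity
    have htlt : t < 1 := by
      rw [ht, div_lt_one (by linarith)]; exact hle
    have hz := hc p x0 t htpos htlt
    set z := t • p + (1 - t) • x0 with hzdef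
    have hzball : z ∈ Metric.closedBall x0 1 := by
      rw [Metric.mem_closedBall, dist_eq_norm]
      have : z - x0 = t • (p - x0) := by rw [hzdef]; module
      rw [this, norm_smul]
      simp only [Real.norm_eq_abs, abs_of_pos htpos]
      rw [ht, one_div, inv_mul_cancel₀ (by positivity : R ≠ 0)]
    have hgz : (m : EReal) ≤ g z := hm z hzball
    rw [hrp, hr0] at hz
    have hz2 : g z ≤ ((t * rp + (1 - t) * r0 : ℝ) : EReal) := by
      refine le_trans hz (le_of_eq ?_)
      rw [EReal.coe_add, EReal.coe_mul, EReal.coe_mul]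
    have hreal : m ≤ t * rp + (1 - t) * r0 :=
      EReal.coe_le_coe_iff.1 (le_trans hgz hz2)
    rw [hrp]
    apply EReal.coe_le_coe_iff.2
    -- from m ≤ rp/R + (1-1/R) r0  conclude  min m r0 - |m-r0| * R ≤ rp
    have hRpos : (0:ℝ) < R := by linarith
    have h1 : R * m ≤ rp + (R - 1) * r0 := by
      have := mul_le_mul_of_nonneg_left hreal (le_of_lt hRpos)
      rw [ht] at this
      field_simp at this
      nlinarith [this]
    have habs : -(|m - r0|) ≤ m - r0 := neg_abs_le _
    have hmin : min m r0 ≤ r0 := min_le_right _ _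
    nlinarith [mul_le_mul_of_nonneg_left habs (le_of_lt hRpos)]

lemma quad_bound {γ K s d A : ℝ} (hγ : 0 < γ) (hK : 0 ≤ K) (hs : 0 ≤ s) (hd : 0 ≤ d) :
    A - K * d - γ * K ^ 2 ≤ A - K * (s + d) + 1 / (2 * γ) * s ^ 2 := by
  have h2γ : (0:ℝ) < 2 * γ := by linarith
  have key : 1 / (2 * γ) * (2 * γ) = 1 := by field_simp
  nlinarith [sq_nonneg (s - γ * K), mul_pos hγ hγ, sq_nonneg s,
    mul_nonneg (mul_nonneg hγ.le hK) hs, sq_nonneg (γ * K)]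

-- parallelogram / midpoint identity
lemma norm_midpoint {X : Type*} [NormedAddCommGroup X] [InnerProductSpace ℝ X]
    (x p q : X) :
    ‖x - ((1/2 : ℝ) • p + (1/2 : ℝ) • q)‖ ^ 2
      = (‖x - p‖ ^ 2 + ‖x - q‖ ^ 2) / 2 - ‖p - q‖ ^ 2 / 4 := by
  have h := parallelogram_law_with_norm ℝ (x - p) (x - q)
  have h1 : (x - p) + (x - q) = (2 : ℝ) • (x - ((1/2 : ℝ) • p + (1/2 : ℝ) • q)) := by
    module
  have h2 : (x - p) - (x - q) = q - p := by abel
  rw [h1, h2] at h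
  have h3 : ‖(2:ℝ) • (x - ((1/2 : ℝ) • p + (1/2 : ℝ) • q))‖
      = 2 * ‖x - ((1/2 : ℝ) • p + (1/2 : ℝ) • q)‖ := by
    rw [norm_smul]; simp [Real.norm_eq_abs]
  rw [h3, norm_sub_rev q p] at h
  nlinarith [h]

section Prox
variable {X : Type*} [NormedAddCommGroup X] [InnerProductSpace ℝ X] [FiniteDimensional ℝ X]
variable {g : X → EReal} {γ : ℝ}

lemma ereal_le_of_forall_eps {a : EReal} {r : ℝ}
    (h : ∀ ε : ℝ, 0 < ε → a ≤ ((r + ε : ℝ) : EReal)) : a ≤ (r : EReal) := by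
  by_contra hcon
  push_neg at hcon
  rcases EReal.lt_iff_exists_real_btwn.1 hcon with ⟨t, hrt, hta⟩
  have := h (t - r) (by exact_mod_cast sub_pos.2 (EReal.coe_lt_coe_iff.1 hrt))
  rw [show r + (t - r) = t by ring] at this
  exact absurd (lt_of_lt_of_le hta this) (lt_irrefl _)

lemma moreau_bddBelow (hg : ProperFn g) (hl : LowerSemicontinuous g)
    (hc : ERealConvexFn g) (hγ : 0 < γ) (x : X) :
    ∃ B : ℝ, ∀ p : X, (B : EReal) ≤ g p + ((1 / (2 * γ) * ‖x - p‖ ^ 2 : ℝ) : EReal) := by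
  obtain ⟨x0, r0, A, K, hx0, hK, hmin⟩ := linear_minorant hg hl hc
  refine ⟨A - K * ‖x - x0‖ - γ * K ^ 2, fun p => ?_⟩
  rcases ereal_ne_bot_cases (g p) (hg.2 p) with htop | ⟨rp, hrp⟩
  · rw [htop, EReal.top_add_coe]; exact le_top
  · rw [hrp, ← EReal.coe_add]
    apply EReal.coe_le_coe_iff.2
    have h1 : A - K * ‖p - x0‖ ≤ rp := by
      have := hmin p; rw [hrp] at this; exact EReal.coe_le_coe_iff.1 this
    have h2 : ‖p - x0‖ ≤ ‖x - p‖ + ‖x - x0‖ := by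
      calc ‖p - x0‖ = ‖(p - x) + (x - x0)‖ := by abel_nf
        _ ≤ ‖p - x‖ + ‖x - x0‖ := norm_add_le _ _
        _ = ‖x - p‖ + ‖x - x0‖ := by rw [norm_sub_rev]
    have h3 := quad_bound (A := A) (s := ‖x - p‖) (d := ‖x - x0‖) hγ hK
      (norm_nonneg _) (norm_nonneg _)
    have h4 : K * ‖p - x0‖ ≤ K * (‖x - p‖ + ‖x - x0‖) :=
      mul_le_mul_of_nonneg_left h2 hK
    linarith
end Prox

section Prox2
variable {X : Type*} [NormedAddCommGroup X] [InnerProductSpace ℝ X] [FiniteDimensional ℝ X]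
variable {g : X → EReal} {γ : ℝ}

lemma moreau_real (hg : ProperFn g) (hl : LowerSemicontinuous g)
    (hc : ERealConvexFn g) (hγ : 0 < γ) (x : X) :
    ∃ μ : ℝ, moreau γ g x = (μ : EReal) := by
  obtain ⟨B, hB⟩ := moreau_bddBelow hg hl hc hγ x
  have hge : (B : EReal) ≤ moreau γ g x := le_iInf hB
  obtain ⟨x0, hx0⟩ := hg.1
  obtain ⟨r0, hr0⟩ : ∃ r : ℝ, g x0 = (r : EReal) := by
    rcases ereal_ne_bot_cases (g x0) (hg.2 x0) with h | h
    · exact absurd h hx0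
    · exact h
  have hle : moreau γ g x ≤ ((r0 + 1 / (2 * γ) * ‖x - x0‖ ^ 2 : ℝ) : EReal) := by
    refine le_trans (iInf_le _ x0) ?_
    rw [hr0, ← EReal.coe_add]
  have hnbot : moreau γ g x ≠ ⊥ := fun h => by
    rw [h] at hge
    exact absurd hge (by simp)
  have hntop : moreau γ g x ≠ ⊤ := fun h => by
    rw [h] at hle
    exact absurd (top_le_iff.1 hle) (EReal.coe_ne_top _)
  rcases ereal_ne_bot_cases _ hnbot with h | h
  · exact absurd h hntop
  · exact h

lemma midpoint_key (hc : ERealConvexFn g) (hγ : 0 < γ) {x pa pb : X} {ra rb μ : ℝ}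
    (ha : g pa = (ra : EReal)) (hb : g pb = (rb : EReal))
    (hmor : ∀ y : X, (μ : EReal) ≤ g y + ((1 / (2 * γ) * ‖x - y‖ ^ 2 : ℝ) : EReal)) :
    1 / (2 * γ) / 4 * ‖pa - pb‖ ^ 2
      ≤ ((ra + 1 / (2 * γ) * ‖x - pa‖ ^ 2) + (rb + 1 / (2 * γ) * ‖x - pb‖ ^ 2)) / 2 - μ := by
  have hcm := hc pa pb (1/2) (by norm_num) (by norm_num)
  rw [ha, hb] at hcm
  set m : X := (1/2 : ℝ) • pa + (1 - (1/2:ℝ)) • pb with hm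
  have hcm2 : g m ≤ (((1/2) * ra + (1 - 1/2) * rb : ℝ) : EReal) := by
    refine le_trans hcm (le_of_eq ?_)
    rw [EReal.coe_add, EReal.coe_mul, EReal.coe_mul]
  have h2 := hmor m
  have h3 : (μ : EReal) ≤ (((1/2) * ra + (1 - 1/2) * rb + 1 / (2 * γ) * ‖x - m‖ ^ 2 : ℝ) : EReal) := by
    refine le_trans h2 ?_
    rw [EReal.coe_add]
    exact add_le_add_left hcm2 _
  have hreal := EReal.coe_le_coe_iff.1 h3
  have hmid : ‖x - m‖ ^ 2 = (‖x - pa‖ ^ 2 + ‖x - pb‖ ^ 2) / 2 - ‖pa - pb‖ ^ 2 / 4 := by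
    have := norm_midpoint x pa pb
    rw [hm]; norm_num at this ⊢; convert this using 3 <;> norm_num
  rw [hmid] at hreal
  linarith
end Prox2

section Prox3
variable {X : Type*} [NormedAddCommGroup X] [InnerProductSpace ℝ X] [FiniteDimensional ℝ X]
variable {g : X → EReal} {γ : ℝ}

lemma g_real_of_sum {a : EReal} (hbot : a ≠ ⊥) {w v : ℝ}
    (h : a + ((w : ℝ) : EReal) = ((v : ℝ) : EReal)) : a = ((v - w : ℝ) : EReal) := by
  rcases ereal_ne_bot_cases a hbot with htop | ⟨r, hr⟩
  · rw [htop, EReal.top_add_coe] at h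
    exact absurd h (by simp)
  · rw [hr, ← EReal.coe_add] at h
    rw [hr]
    norm_cast at h ⊢
    linarith

lemma prox_singleton (hg : ProperFn g) (hl : LowerSemicontinuous g)
    (hc : ERealConvexFn g) (hγ : 0 < γ) (x : X) :
    ∃ p : X, proxSet γ g x = {p} := by
  obtain ⟨μ, hμ⟩ := moreau_real hg hl hc hγ x
  set c : ℝ := 1 / (2 * γ) with hcdef
  have hcpos : 0 < c := by positivity
  have hmor : ∀ y : X, (μ : EReal) ≤ g y + ((c * ‖x - y‖ ^ 2 : ℝ) : EReal) := by
    intro y; rw [← hμ]; exact iInf_le _ y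
  have hseq : ∀ n : ℕ, ∃ y : X,
      g y + ((c * ‖x - y‖ ^ 2 : ℝ) : EReal) < ((μ + 1 / ((n:ℝ) + 1) : ℝ) : EReal) := by
    intro n
    have hlt : moreau γ g x < ((μ + 1 / ((n:ℝ) + 1) : ℝ) : EReal) := by
      rw [hμ]
      exact EReal.coe_lt_coe_iff.2 (lt_add_of_pos_right μ (by positivity))
    exact iInf_lt_iff.1 hlt
  choose p hp using hseq
  have hgr : ∀ n : ℕ, ∃ r : ℝ, g (p n) = (r : EReal) := by
    intro n
    rcases ereal_ne_bot_cases _ (hg.2 (p n)) with htop | h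
    · exfalso
      have := hp n
      rw [htop, EReal.top_add_coe] at this
      exact absurd this (by simp)
    · exact h
  choose r hrr using hgr
  have hv1 : ∀ n, μ ≤ r n + c * ‖x - p n‖ ^ 2 := by
    intro n
    have := hmor (p n); rw [hrr n, ← EReal.coe_add] at this
    exact EReal.coe_le_coe_iff.1 this
  have hv2 : ∀ n, r n + c * ‖x - p n‖ ^ 2 < μ + 1 / ((n:ℝ) + 1) := by
    intro n
    have := hp n; rw [hrr n, ← EReal.coe_add] at this
    exact EReal.coe_lt_coe_iff.1 this
  -- Cauchy
  have hkey : ∀ a b N : ℕ, N ≤ a → N ≤ b →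
      dist (p a) (p b) ≤ Real.sqrt (8 * γ / ((N:ℝ) + 1)) := by
    intro a b N hNa hNb
    have hmk := midpoint_key hc hγ (hrr a) (hrr b) hmor
    have hNpos : (0:ℝ) < (N:ℝ) + 1 := by positivity
    have h1a : 1 / ((a:ℝ) + 1) ≤ 1 / ((N:ℝ) + 1) := by
      apply one_div_le_one_div_of_le hNpos
      have : (N:ℝ) ≤ a := by exact_mod_cast hNa
      linarith
    have h1b : 1 / ((b:ℝ) + 1) ≤ 1 / ((N:ℝ) + 1) := by
      apply one_div_le_one_div_of_le hNpos
      have : (N:ℝ) ≤ b := by exact_mod_cast hNb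
      linarith
    have h3 : c / 4 * ‖p a - p b‖ ^ 2 ≤ 1 / ((N:ℝ) + 1) := by
      have := hv2 a; have := hv2 b
      rw [hcdef] at *
      linarith [hmk]
    have hmul := mul_le_mul_of_nonneg_left h3 (by positivity : (0:ℝ) ≤ 8 * γ)
    have hid : 8 * γ * (c / 4 * ‖p a - p b‖ ^ 2) = ‖p a - p b‖ ^ 2 := by
      rw [hcdef]; field_simp; ring
    rw [hid] at hmul
    have hsq : ‖p a - p b‖ ^ 2 ≤ 8 * γ / ((N:ℝ) + 1) := by
      calc ‖p a - p b‖ ^ 2 ≤ 8 * γ * (1 / ((N:ℝ) + 1)) := hmul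
        _ = 8 * γ / ((N:ℝ) + 1) := by ring
    rw [dist_eq_norm]
    have := Real.sqrt_le_sqrt hsq
    calc ‖p a - p b‖ = Real.sqrt (‖p a - p b‖ ^ 2) := by
          rw [Real.sqrt_sq (norm_nonneg _)]
      _ ≤ Real.sqrt (8 * γ / ((N:ℝ) + 1)) := Real.sqrt_le_sqrt hsq
  have hb0 : Tendsto (fun N : ℕ => Real.sqrt (8 * γ / ((N:ℝ) + 1))) atTop (𝓝 0) := by
    have h1 : Tendsto (fun N : ℕ => 8 * γ / ((N:ℝ) + 1)) atTop (𝓝 0) := by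
      have h2 := tendsto_one_div_add_atTop_nhds_zero_nat.const_mul (8 * γ)
      simp only [mul_zero] at h2
      convert h2 using 2 with N
      ring
    have h3 := (Real.continuous_sqrt.tendsto 0).comp h1
    rw [Real.sqrt_zero] at h3; exact h3
  have hcauchy : CauchySeq p := cauchySeq_of_le_tendsto_0 _ hkey hb0
  obtain ⟨q, hq⟩ := cauchySeq_tendsto_of_complete hcauchy
  -- q attains the infimum
  have hnorm : Tendsto (fun n => c * ‖x - p n‖ ^ 2) atTop (𝓝 (c * ‖x - q‖ ^ 2)) :=
    (((tendsto_const_nhds.sub hq).norm.pow 2).const_mul c)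
  have hFq_le : g q + ((c * ‖x - q‖ ^ 2 : ℝ) : EReal) ≤ (μ : EReal) := by
    apply ereal_le_of_forall_eps
    intro ε hε
    by_contra hcon
    push_neg at hcon
    have hlt : ((μ + ε - c * ‖x - q‖ ^ 2 : ℝ) : EReal) < g q := by
      by_contra h2
      push_neg at h2
      have h4 := add_le_add_left h2 ((c * ‖x - q‖ ^ 2 : ℝ) : EReal)
      rw [← EReal.coe_add] at h4
      have h5 : (μ + ε - c * ‖x - q‖ ^ 2) + c * ‖x - q‖ ^ 2 = μ + ε := by ring
      rw [h5] at h4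
      exact absurd (lt_of_lt_of_le hcon h4) (lt_irrefl _)
    have hev := hl q _ hlt
    have hev2 := hq.eventually hev
    have e1 : ∀ᶠ n : ℕ in atTop, 1 / ((n:ℝ) + 1) < ε / 2 :=
      tendsto_one_div_add_atTop_nhds_zero_nat.eventually_lt_const (by positivity)
    have e2 : ∀ᶠ n : ℕ in atTop, c * ‖x - q‖ ^ 2 - ε / 2 < c * ‖x - p n‖ ^ 2 :=
      hnorm.eventually_const_lt (by linarith)
    obtain ⟨n, hn1, hn2, hn3⟩ := (hev2.and (e1.and e2)).exists
    rw [hrr n] at hn1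
    have hn1' : μ + ε - c * ‖x - q‖ ^ 2 < r n := EReal.coe_lt_coe_iff.1 hn1
    have := hv2 n
    linarith [hn2, hn3]
  have hqmem : q ∈ proxSet γ g x := by
    have : g q + ((c * ‖x - q‖ ^ 2 : ℝ) : EReal) = (μ : EReal) :=
      le_antisymm hFq_le (hmor q)
    simpa [proxSet, hμ, hcdef] using this
  refine ⟨q, Set.eq_singleton_iff_unique_mem.2 ⟨hqmem, fun p' hp' => ?_⟩⟩
  -- uniqueness
  have hq' : g q = ((μ - c * ‖x - q‖ ^ 2 : ℝ) : EReal) := by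
    apply g_real_of_sum (hg.2 q)
    exact le_antisymm hFq_le (hmor q)
  have hp'F : g p' + ((c * ‖x - p'‖ ^ 2 : ℝ) : EReal) = (μ : EReal) := by
    have := hp'
    simp only [proxSet, Set.mem_setOf_eq, hμ] at this
    rw [hcdef]
    exact this
  have hp'' : g p' = ((μ - c * ‖x - p'‖ ^ 2 : ℝ) : EReal) := g_real_of_sum (hg.2 p') hp'F
  have hmk := midpoint_key hc hγ hp'' hq' hmor
  rw [← hcdef] at hmk
  have hS : ‖p' - q‖ ^ 2 ≤ 0 := by nlinarith [hmk, hcpos]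
  have : ‖p' - q‖ = 0 := by nlinarith [norm_nonneg (p' - q), sq_nonneg ‖p' - q‖]
  have := norm_eq_zero.1 this
  exact sub_eq_zero.1 this
end Prox3

section Prox4
variable {X : Type*} [NormedAddCommGroup X] [InnerProductSpace ℝ X] [FiniteDimensional ℝ X]
variable {g : X → EReal} {γ : ℝ}

omit [FiniteDimensional ℝ X] in
lemma prox_var_ineq (hc : ERealConvexFn g) (hγ : 0 < γ) {x pp z : X} {rp rz : ℝ}
    (hp : g pp = (rp : EReal)) (hz : g z = (rz : EReal))
    (hmin : ∀ y : X, g pp + ((1 / (2 * γ) * ‖x - pp‖ ^ 2 : ℝ) : EReal)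
      ≤ g y + ((1 / (2 * γ) * ‖x - y‖ ^ 2 : ℝ) : EReal)) :
    2 * (1 / (2 * γ)) * ⟪x - pp, z - pp⟫ ≤ rz - rp := by
  set c : ℝ := 1 / (2 * γ) with hcdef
  have hcpos : 0 < c := by positivity
  have hstep : ∀ t : ℝ, 0 < t → t < 1 →
      2 * c * ⟪x - pp, z - pp⟫ ≤ rz - rp + c * t * ‖z - pp‖ ^ 2 := by
    intro t ht ht1
    have hcw := hc z pp t ht ht1
    rw [hz, hp] at hcw
    have hcw2 : g (t • z + (1 - t) • pp) ≤ ((t * rz + (1 - t) * rp : ℝ) : EReal) := by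
      refine le_trans hcw (le_of_eq ?_)
      rw [EReal.coe_add, EReal.coe_mul, EReal.coe_mul]
    have hm := hmin (t • z + (1 - t) • pp)
    rw [hp, ← EReal.coe_add] at hm
    have hm2 : ((rp + c * ‖x - pp‖ ^ 2 : ℝ) : EReal)
        ≤ ((t * rz + (1 - t) * rp + c * ‖x - (t • z + (1 - t) • pp)‖ ^ 2 : ℝ) : EReal) := by
      refine le_trans hm ?_
      rw [EReal.coe_add]
      exact add_le_add_left hcw2 _
    have hreal := EReal.coe_le_coe_iff.1 hm2
    have hvec : x - (t • z + (1 - t) • pp) = (x - pp) - t • (z - pp) := by module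
    have hnorm : ‖x - (t • z + (1 - t) • pp)‖ ^ 2
        = ‖x - pp‖ ^ 2 - 2 * t * ⟪x - pp, z - pp⟫ + t ^ 2 * ‖z - pp‖ ^ 2 := by
      rw [hvec, norm_sub_sq_real, real_inner_smul_right, norm_smul]
      simp only [Real.norm_eq_abs, abs_of_pos ht]
      ring
    rw [hnorm] at hreal
    nlinarith [hreal, ht, sq_nonneg (‖z - pp‖)]
  apply le_of_forall_pos_le_add
  intro ε hε
  set t : ℝ := min (ε / (c * ‖z - pp‖ ^ 2 + 1)) (1/2) with htdef
  have htpos : 0 < t := lt_min (by positivity) (by norm_num)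
  have htlt : t < 1 := lt_of_le_of_lt (min_le_right _ _) (by norm_num)
  have hbound := hstep t htpos htlt
  have htle : t ≤ ε / (c * ‖z - pp‖ ^ 2 + 1) := min_le_left _ _
  have hpos2 : (0:ℝ) < c * ‖z - pp‖ ^ 2 + 1 := by positivity
  have : c * t * ‖z - pp‖ ^ 2 ≤ ε := by
    have h1 : t * (c * ‖z - pp‖ ^ 2 + 1) ≤ ε := by
      rw [div_eq_mul_inv] at htle
      calc t * (c * ‖z - pp‖ ^ 2 + 1)
          ≤ ε * (c * ‖z - pp‖ ^ 2 + 1)⁻¹ * (c * ‖z - pp‖ ^ 2 + 1) :=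
            mul_le_mul_of_nonneg_right htle (le_of_lt hpos2)
        _ = ε := by field_simp
    nlinarith [htpos.le, mul_nonneg hcpos.le (sq_nonneg ‖z - pp‖)]
  linarith

lemma prox_F_real (hg : ProperFn g) (hl : LowerSemicontinuous g) (hc : ERealConvexFn g)
    (hγ : 0 < γ) {x px : X} (hx : px ∈ proxSet γ g x) :
    ∃ rp : ℝ, g px = (rp : EReal) ∧
      (moreau γ g x = ((rp + 1 / (2 * γ) * ‖x - px‖ ^ 2 : ℝ) : EReal)) := by
  obtain ⟨μ, hμ⟩ := moreau_real hg hl hc hγ x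
  have hxF : g px + ((1 / (2 * γ) * ‖x - px‖ ^ 2 : ℝ) : EReal) = (μ : EReal) := by
    have := hx
    simp only [proxSet, Set.mem_setOf_eq, hμ] at this
    exact this
  have hgp := g_real_of_sum (hg.2 px) hxF
  refine ⟨μ - 1 / (2 * γ) * ‖x - px‖ ^ 2, hgp, ?_⟩
  rw [hμ]
  norm_cast
  ring

lemma prox_firm (hg : ProperFn g) (hl : LowerSemicontinuous g) (hc : ERealConvexFn g)
    (hγ : 0 < γ) {x y px py : X} (hx : px ∈ proxSet γ g x) (hy : py ∈ proxSet γ g y) :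
    ‖px - py‖ ^ 2 + ‖(x - px) - (y - py)‖ ^ 2 ≤ ‖x - y‖ ^ 2 := by
  set c : ℝ := 1 / (2 * γ) with hcdef
  have hcpos : 0 < c := by positivity
  obtain ⟨rp, hrp, _⟩ := prox_F_real hg hl hc hγ hx
  obtain ⟨rq, hrq, _⟩ := prox_F_real hg hl hc hγ hy
  have hminx : ∀ z : X, g px + ((c * ‖x - px‖ ^ 2 : ℝ) : EReal)
      ≤ g z + ((c * ‖x - z‖ ^ 2 : ℝ) : EReal) := by
    intro z
    have h1 : g px + ((c * ‖x - px‖ ^ 2 : ℝ) : EReal) = moreau γ g x := hx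
    rw [h1]
    exact iInf_le _ z
  have hminy : ∀ z : X, g py + ((c * ‖y - py‖ ^ 2 : ℝ) : EReal)
      ≤ g z + ((c * ‖y - z‖ ^ 2 : ℝ) : EReal) := by
    intro z
    have h1 : g py + ((c * ‖y - py‖ ^ 2 : ℝ) : EReal) = moreau γ g y := hy
    rw [h1]
    exact iInf_le _ z
  have hA := prox_var_ineq hc hγ hrp hrq hminx
  have hB := prox_var_ineq hc hγ hrq hrp hminy
  set u := x - px with hu
  set v := y - py with hv
  set b := px - py with hb
  have hAB : -⟪u, b⟫ + ⟪v, b⟫ ≤ 0 := by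
    have e1 : py - px = -b := by rw [hb]; abel
    rw [e1] at hA
    rw [inner_neg_right] at hA
    nlinarith [hA, hB, hcpos]
  set w := u - v with hw
  have hxy : x - y = w + b := by rw [hw, hu, hv, hb]; abel
  have hnorm : ‖x - y‖ ^ 2 = ‖w‖ ^ 2 + 2 * ⟪w, b⟫ + ‖b‖ ^ 2 := by
    rw [hxy]; exact norm_add_sq_real w b
  have hinner : ⟪w, b⟫ = ⟪u, b⟫ - ⟪v, b⟫ := inner_sub_left u v b
  have : (0:ℝ) ≤ ⟪w, b⟫ := by rw [hinner]; linarith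
  rw [hnorm]
  linarith
end Prox4

section Cont
variable {X : Type*} [NormedAddCommGroup X] [InnerProductSpace ℝ X] [FiniteDimensional ℝ X]
variable {g : X → EReal} {γ : ℝ}

lemma sq_diff_bound (u v : X) : ‖u‖ ^ 2 - ‖v‖ ^ 2 ≤ ‖u - v‖ * (‖u‖ + ‖v‖) := by
  nlinarith [norm_sub_norm_le u v, norm_nonneg u, norm_nonneg v, norm_nonneg (u - v)]

lemma moreau_shift (hg : ProperFn g) (hl : LowerSemicontinuous g) (hc : ERealConvexFn g)
    (hγ : 0 < γ) {w pw : X} (hpw : pw ∈ proxSet γ g w) (u : X) {μu μw : ℝ}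
    (hμu : moreau γ g u = (μu : EReal)) (hμw : moreau γ g w = (μw : EReal)) :
    μu ≤ μw + 1 / (2 * γ) * (‖u - pw‖ ^ 2 - ‖w - pw‖ ^ 2) := by
  obtain ⟨rw', hrw', hval⟩ := prox_F_real hg hl hc hγ hpw
  rw [hμw] at hval
  have hval' : μw = rw' + 1 / (2 * γ) * ‖w - pw‖ ^ 2 := EReal.coe_eq_coe_iff.1 hval
  have h1 : moreau γ g u ≤ ((rw' + 1 / (2 * γ) * ‖u - pw‖ ^ 2 : ℝ) : EReal) := by
    refine le_trans (iInf_le _ pw) (le_of_eq ?_)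
    rw [hrw', ← EReal.coe_add]
  rw [hμu] at h1
  have := EReal.coe_le_coe_iff.1 h1
  linarith

lemma moreau_tendsto (hg : ProperFn g) (hl : LowerSemicontinuous g) (hc : ERealConvexFn g)
    (hγ : 0 < γ) (P : X → X) (hP : ∀ y, P y ∈ proxSet γ g y)
    (hnonexp : ∀ a b : X, ‖P a - P b‖ ≤ ‖a - b‖)
    (mRf : X → ℝ) (hmR : ∀ y, moreau γ g y = ((mRf y : ℝ) : EReal))
    {x : X} {xn : ℕ → X} (hx : Tendsto xn atTop (𝓝 x)) :
    Tendsto (fun n => mRf (xn n)) atTop (𝓝 (mRf x)) := by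
  set c : ℝ := 1 / (2 * γ) with hcdef
  have hcpos : 0 < c := by positivity
  set δ : ℕ → ℝ := fun n => ‖xn n - x‖ with hδdef
  have hδ : Tendsto δ atTop (𝓝 0) := by
    have := (tendsto_iff_dist_tendsto_zero).1 hx
    simpa [hδdef, dist_eq_norm] using this
  set E : ℝ := ‖x - P x‖ with hE
  have habs : ∀ n, |mRf (xn n) - mRf x| ≤ c * δ n * (5 * δ n + 2 * E) := by
    intro n
    have hδn : 0 ≤ δ n := norm_nonneg _
    have hEn : 0 ≤ E := norm_nonneg _
    -- upper bound
    have hup : mRf (xn n) - mRf x ≤ c * δ n * (5 * δ n + 2 * E) := by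
      have h1 := moreau_shift hg hl hc hγ (hP x) (xn n) (hmR (xn n)) (hmR x)
      have h2 : ‖xn n - P x‖ ^ 2 - ‖x - P x‖ ^ 2
          ≤ ‖xn n - x‖ * (‖xn n - P x‖ + ‖x - P x‖) := by
        have := sq_diff_bound (xn n - P x) (x - P x)
        have he : (xn n - P x) - (x - P x) = xn n - x := by abel
        rw [he] at this
        exact this
      have h3 : ‖xn n - P x‖ ≤ δ n + E := by
        calc ‖xn n - P x‖ = ‖(xn n - x) + (x - P x)‖ := by abel_nf
          _ ≤ ‖xn n - x‖ + ‖x - P x‖ := norm_add_le _ _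
      nlinarith [mul_le_mul_of_nonneg_left h2 hcpos.le,
        mul_nonneg hcpos.le (mul_nonneg hδn hδn),
        mul_le_mul_of_nonneg_left h3 (mul_nonneg hcpos.le hδn)]
    -- lower bound
    have hlow : mRf x - mRf (xn n) ≤ c * δ n * (5 * δ n + 2 * E) := by
      have h1 := moreau_shift hg hl hc hγ (hP (xn n)) x (hmR x) (hmR (xn n))
      have h2 : ‖x - P (xn n)‖ ^ 2 - ‖xn n - P (xn n)‖ ^ 2
          ≤ ‖x - xn n‖ * (‖x - P (xn n)‖ + ‖xn n - P (xn n)‖) := by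
        have := sq_diff_bound (x - P (xn n)) (xn n - P (xn n))
        have he : (x - P (xn n)) - (xn n - P (xn n)) = x - xn n := by abel
        rw [he] at this
        exact this
      have hδsym : ‖x - xn n‖ = δ n := norm_sub_rev x (xn n)
      have h4 : ‖xn n - P (xn n)‖ ≤ 2 * δ n + E := by
        calc ‖xn n - P (xn n)‖
            = ‖(xn n - x) + (x - P x) + (P x - P (xn n))‖ := by abel_nf
          _ ≤ ‖(xn n - x) + (x - P x)‖ + ‖P x - P (xn n)‖ := norm_add_le _ _
          _ ≤ ‖xn n - x‖ + ‖x - P x‖ + ‖P x - P (xn n)‖ := by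
              linarith [norm_add_le (xn n - x) (x - P x)]
          _ ≤ δ n + E + δ n := by
              have := hnonexp x (xn n)
              have h5 : ‖x - xn n‖ = δ n := norm_sub_rev x (xn n)
              linarith [this, h5.le]
          _ = 2 * δ n + E := by ring
      have h5 : ‖x - P (xn n)‖ ≤ 3 * δ n + E := by
        calc ‖x - P (xn n)‖ = ‖(x - xn n) + (xn n - P (xn n))‖ := by abel_nf
          _ ≤ ‖x - xn n‖ + ‖xn n - P (xn n)‖ := norm_add_le _ _
          _ ≤ δ n + (2 * δ n + E) := by rw [hδsym]; linarith
          _ = 3 * δ n + E := by ring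
      rw [hδsym] at h2
      nlinarith [mul_le_mul_of_nonneg_left h2 hcpos.le,
        mul_nonneg hcpos.le (mul_nonneg hδn hδn),
        mul_le_mul_of_nonneg_left h4 (mul_nonneg hcpos.le hδn),
        mul_le_mul_of_nonneg_left h5 (mul_nonneg hcpos.le hδn)]
    rw [abs_le]
    constructor <;> linarith
  have hbnd : Tendsto (fun n => c * δ n * (5 * δ n + 2 * E)) atTop (𝓝 0) := by
    have h1 := (hδ.const_mul c).mul ((hδ.const_mul 5).add_const (2 * E))
    simpa using h1
  have h2 : Tendsto (fun n => mRf (xn n) - mRf x) atTop (𝓝 0) := by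
    apply squeeze_zero_norm _ hbnd
    intro n
    rw [Real.norm_eq_abs]
    exact habs n
  simpa using h2.add_const (mRf x)
end Cont

section MinLem
variable {X : Type*} [NormedAddCommGroup X] [InnerProductSpace ℝ X]

lemma ereal_iInf_add_coe {I : Type*} [Finite I] [Nonempty I] (a : I → EReal) (r : ℝ) :
    (⨅ j, a j) + ((r : ℝ) : EReal) = ⨅ j, (a j + ((r : ℝ) : EReal)) := by
  obtain ⟨i0, hi0⟩ := Finite.exists_min a
  have h1 : (⨅ j, a j) = a i0 := le_antisymm (iInf_le _ _) (le_iInf hi0)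
  rw [h1]
  exact le_antisymm (le_iInf fun j => add_le_add_left (hi0 j) _) (iInf_le _ i0)

lemma moreau_min_eq {I : Type*} [Finite I] [Nonempty I] (f : I → X → EReal) (γ : ℝ) (x : X) :
    moreau γ (fun y => ⨅ j, f j y) x = ⨅ j, moreau γ (f j) x := by
  unfold moreau
  have h : ∀ y : X, (⨅ j, f j y) + ((1 / (2 * γ) * ‖x - y‖ ^ 2 : ℝ) : EReal)
      = ⨅ j, (f j y + ((1 / (2 * γ) * ‖x - y‖ ^ 2 : ℝ) : EReal)) :=
    fun y => ereal_iInf_add_coe _ _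
  simp_rw [h]
  exact iInf_comm

lemma iInf_coe_eq_iff {I : Type*} [Finite I] [Nonempty I] (a : I → ℝ) (i : I) :
    (⨅ j, ((a j : ℝ) : EReal)) = ((a i : ℝ) : EReal) ↔ ∀ j, a i ≤ a j := by
  constructor
  · intro h j
    have := iInf_le (fun j => ((a j : ℝ) : EReal)) j
    rw [h] at this
    exact EReal.coe_le_coe_iff.1 this
  · intro h
    exact le_antisymm (iInf_le _ i) (le_iInf fun j => EReal.coe_le_coe_iff.2 (h j))

lemma iInf_coe_attained {I : Type*} [Finite I] [Nonempty I] (a : I → ℝ) :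
    ∃ i, (⨅ j, ((a j : ℝ) : EReal)) = ((a i : ℝ) : EReal) ∧ ∀ j, a i ≤ a j := by
  obtain ⟨i, hi⟩ := Finite.exists_min a
  exact ⟨i, (iInf_coe_eq_iff a i).2 hi, hi⟩
end MinLem

theorem stmt_16 {X I : Type*}
    [NormedAddCommGroup X] [InnerProductSpace ℝ X] [FiniteDimensional ℝ X]
    [Fintype I] [Nonempty I]
    (f : I → X → EReal) (hf : ∀ i, ProperFn (f i))
    (hlsc : ∀ i, LowerSemicontinuous (f i)) (hcvx : ∀ i, ERealConvexFn (f i))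
    (γ : ℝ) (hγ : 0 < γ) :
    ∃ P : I → X → X,
      (∀ i x, proxSet γ (f i) x = {P i x}) ∧
      (∀ i, HalfAveraged (P i)) ∧
      OSCIdx (fun x : X =>
        {i : I | moreau γ (fun y => ⨅ j, f j y) x = moreau γ (f i) x}) ∧
      (∀ x : X,
        {i : I | moreau γ (fun y => ⨅ j, f j y) x = moreau γ (f i) x}.Nonempty) ∧
      (∀ x : X, proxSet γ (fun y => ⨅ j, f j y) x =
        {p | ∃ i ∈ {i : I | moreau γ (fun y => ⨅ j, f j y) x = moreau γ (f i) x},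
          p = P i x}) := by
  classical
  choose P hP using fun i x => prox_singleton (hf i) (hlsc i) (hcvx i) hγ x
  have hPmem : ∀ i x, P i x ∈ proxSet γ (f i) x := fun i x => by rw [hP i x]; rfl
  have hhalf : ∀ i, HalfAveraged (P i) := fun i x y =>
    prox_firm (hf i) (hlsc i) (hcvx i) hγ (hPmem i x) (hPmem i y)
  have hnonexp : ∀ i, ∀ a b : X, ‖P i a - P i b‖ ≤ ‖a - b‖ := by
    intro i a b
    have h := hhalf i a b
    nlinarith [norm_nonneg (P i a - P i b), norm_nonneg (a - b),
      sq_nonneg (‖(a - P i a) - (b - P i b)‖)]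
  choose mR hmR using fun i x => moreau_real (hf i) (hlsc i) (hcvx i) hγ x
  have hminrep : ∀ x : X, moreau γ (fun y => ⨅ j, f j y) x = ⨅ j, ((mR j x : ℝ) : EReal) := by
    intro x
    rw [moreau_min_eq]
    exact iInf_congr fun j => hmR j x
  have hφchar : ∀ (x : X) (i : I),
      (moreau γ (fun y => ⨅ j, f j y) x = moreau γ (f i) x) ↔ ∀ j, mR i x ≤ mR j x := by
    intro x i
    rw [hminrep x, hmR i x]
    exact iInf_coe_eq_iff _ i
  refine ⟨P, hP, hhalf, ?_, ?_, ?_⟩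
  · -- OSC
    intro x i xn hxn hmem
    rw [Set.mem_setOf_eq, hφchar x i]
    intro j
    have hcont_i := moreau_tendsto (hf i) (hlsc i) (hcvx i) hγ (P i) (hPmem i)
      (hnonexp i) (mR i) (hmR i) hxn
    have hcont_j := moreau_tendsto (hf j) (hlsc j) (hcvx j) hγ (P j) (hPmem j)
      (hnonexp j) (mR j) (hmR j) hxn
    refine le_of_tendsto_of_tendsto' hcont_i hcont_j fun n => ?_
    exact (hφchar (xn n) i).1 (hmem n) j
  · -- nonempty values
    intro x
    obtain ⟨i, hi, _⟩ := iInf_coe_attained (fun j => mR j x)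
    refine ⟨i, ?_⟩
    rw [Set.mem_setOf_eq, hminrep x, hmR i x]
    exact hi
  · -- prox of min formula
    intro x
    ext p
    simp only [Set.mem_setOf_eq]
    constructor
    · intro hmemp
      have hmemp' : (⨅ j, f j p) + ((1 / (2 * γ) * ‖x - p‖ ^ 2 : ℝ) : EReal)
          = moreau γ (fun y => ⨅ j, f j y) x := hmemp
      obtain ⟨i1, hi1min⟩ := Finite.exists_min (fun j => f j p)
      have hattain : (⨅ j, f j p) = f i1 p :=
        le_antisymm (iInf_le _ _) (le_iInf hi1min)
      have hle1 : moreau γ (f i1) x ≤ f i1 p + ((1 / (2 * γ) * ‖x - p‖ ^ 2 : ℝ) : EReal) :=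
        iInf_le _ p
      have hle2 : moreau γ (fun y => ⨅ j, f j y) x ≤ moreau γ (f i1) x :=
        iInf_mono fun y => add_le_add_left (iInf_le _ i1) _
      have heq : f i1 p + ((1 / (2 * γ) * ‖x - p‖ ^ 2 : ℝ) : EReal)
          = moreau γ (fun y => ⨅ j, f j y) x := by
        rw [← hattain]; exact hmemp'
      have heq2 : moreau γ (fun y => ⨅ j, f j y) x = moreau γ (f i1) x :=
        le_antisymm hle2 (heq ▸ hle1)
      refine ⟨i1, heq2, ?_⟩
      have hmem1 : p ∈ proxSet γ (f i1) x := by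
        show f i1 p + ((1 / (2 * γ) * ‖x - p‖ ^ 2 : ℝ) : EReal) = moreau γ (f i1) x
        rw [heq, heq2]
      rw [hP i1 x] at hmem1
      exact hmem1
    · rintro ⟨i, hi, rfl⟩
      have hPm : f i (P i x) + ((1 / (2 * γ) * ‖x - P i x‖ ^ 2 : ℝ) : EReal)
          = moreau γ (f i) x := hPmem i x
      apply le_antisymm
      · calc (⨅ j, f j (P i x)) + ((1 / (2 * γ) * ‖x - P i x‖ ^ 2 : ℝ) : EReal)
            ≤ f i (P i x) + ((1 / (2 * γ) * ‖x - P i x‖ ^ 2 : ℝ) : EReal) :=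
              add_le_add_left (iInf_le _ i) _
          _ = moreau γ (f i) x := hPm
          _ = moreau γ (fun y => ⨅ j, f j y) x := hi.symm
      · exact iInf_le _ (P i x)
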